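/- For m ≥ 2 let T_m = {x ∈ ℝ^m : x_i ≥ 0 for all i, and √x₁ + … + √x_m ≥ 2√x_k for all k}. Then T_m is a closed convex cone, and T_m equals the convex hull of the set of points x ∈ ℝ^m with nonnegative coordinates for which √x₁ + … + √x_m = 2√x_k for some k. -/

import Mathlib

open Finset

/-- The cone T_m ⊆ ℝ^m: nonnegative vectors x with √x₁ + … + √x_m ≥ 2√x_k for all k. -/
def Tcone (m : ℕ) : Set (Fin m → ℝ) :=
  {x | (∀ i, 0 ≤ x i) ∧ ∀ k, 2 * Real.sqrt (x k) ≤ ∑ i, Real.sqrt (x i)}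

private lemma minkowski {ι : Type*} (s : Finset ι) (A B : ι → ℝ) :
    Real.sqrt ((∑ i ∈ s, A i)^2 + (∑ i ∈ s, B i)^2) ≤ ∑ i ∈ s, Real.sqrt (A i^2 + B i^2) := by
  have h : ∀ i, Real.sqrt (A i^2 + B i^2) = ‖(⟨A i, B i⟩ : ℂ)‖ := by
    intro i
    rw [Complex.norm_def, Complex.normSq_mk]; ring_nf
  have h2 : (∑ i ∈ s, (⟨A i, B i⟩ : ℂ)) = ⟨∑ i ∈ s, A i, ∑ i ∈ s, B i⟩ := by
    apply Complex.ext <;> simp [Complex.re_sum, Complex.im_sum]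
  calc Real.sqrt ((∑ i ∈ s, A i)^2 + (∑ i ∈ s, B i)^2)
      = ‖∑ i ∈ s, (⟨A i, B i⟩ : ℂ)‖ := by
        rw [h2, Complex.norm_def, Complex.normSq_mk]; ring_nf
    _ ≤ ∑ i ∈ s, ‖(⟨A i, B i⟩ : ℂ)‖ := norm_sum_le _ _
    _ = ∑ i ∈ s, Real.sqrt (A i^2 + B i^2) := by simp [h]

private lemma sqrt_pair_mono {a b c d : ℝ} (ha : 0 ≤ a) (hb : 0 ≤ b) (hac : a ≤ c)
    (hbd : b ≤ d) : Real.sqrt (a^2 + b^2) ≤ Real.sqrt (c^2 + d^2) := by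
  apply Real.sqrt_le_sqrt; nlinarith

private lemma key_ineq {m : ℕ} (A B : Fin m → ℝ) (hA : ∀ i, 0 ≤ A i) (hB : ∀ i, 0 ≤ B i)
    (k : Fin m) (h1 : 2 * A k ≤ ∑ i, A i) (h2 : 2 * B k ≤ ∑ i, B i) :
    2 * Real.sqrt (A k^2 + B k^2) ≤ ∑ i, Real.sqrt (A i^2 + B i^2) := by
  have hAk : A k + ∑ i ∈ univ.erase k, A i = ∑ i, A i := Finset.add_sum_erase _ _ (mem_univ k)
  have hBk : B k + ∑ i ∈ univ.erase k, B i = ∑ i, B i := Finset.add_sum_erase _ _ (mem_univ k)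
  have hA' : A k ≤ ∑ i ∈ univ.erase k, A i := by linarith
  have hB' : B k ≤ ∑ i ∈ univ.erase k, B i := by linarith
  have step1 : Real.sqrt (A k^2 + B k^2) ≤
      Real.sqrt ((∑ i ∈ univ.erase k, A i)^2 + (∑ i ∈ univ.erase k, B i)^2) :=
    sqrt_pair_mono (hA k) (hB k) hA' hB'
  have step2 := minkowski (univ.erase k) A B
  have hsum : Real.sqrt (A k^2 + B k^2) + ∑ i ∈ univ.erase k, Real.sqrt (A i^2 + B i^2)
      = ∑ i, Real.sqrt (A i^2 + B i^2) := Finset.add_sum_erase _ (fun i => Real.sqrt (A i^2 + B i^2)) (mem_univ k)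
  linarith

lemma Tcone_convex (m : ℕ) : Convex ℝ (Tcone m) := by
  rintro x ⟨hx0, hx⟩ y ⟨hy0, hy⟩ a b ha hb hab
  constructor
  · intro i
    have := hx0 i; have := hy0 i
    simp only [Pi.add_apply, Pi.smul_apply, smul_eq_mul]
    positivity
  · intro k
    set A : Fin m → ℝ := fun i => Real.sqrt (a * x i) with hAdef
    set B : Fin m → ℝ := fun i => Real.sqrt (b * y i) with hBdef
    have hval : ∀ i, (a • x + b • y) i = A i ^ 2 + B i ^ 2 := by
      intro i
      simp only [hAdef, hBdef, Pi.add_apply, Pi.smul_apply, smul_eq_mul]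
      rw [Real.sq_sqrt (by have := hx0 i; positivity),
        Real.sq_sqrt (by have := hy0 i; positivity)]
    have h1 : 2 * A k ≤ ∑ i, A i := by
      have : ∀ i, A i = Real.sqrt a * Real.sqrt (x i) := by
        intro i; simp [hAdef, Real.sqrt_mul ha]
      simp only [this, ← Finset.mul_sum]
      have := hx k
      nlinarith [Real.sqrt_nonneg a]
    have h2 : 2 * B k ≤ ∑ i, B i := by
      have : ∀ i, B i = Real.sqrt b * Real.sqrt (y i) := by
        intro i; simp [hBdef, Real.sqrt_mul hb]
      simp only [this, ← Finset.mul_sum]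
      have := hy k
      nlinarith [Real.sqrt_nonneg b]
    have := key_ineq A B (fun i => Real.sqrt_nonneg _) (fun i => Real.sqrt_nonneg _) k h1 h2
    simp only [hval]
    exact this

def Eset (m : ℕ) : Set (Fin m → ℝ) :=
  {x : Fin m → ℝ | (∀ i, 0 ≤ x i) ∧ ∃ k, ∑ i, Real.sqrt (x i) = 2 * Real.sqrt (x k)}

lemma Eset_subset (m : ℕ) : Eset m ⊆ Tcone m := by
  rintro x ⟨hx0, k, hk⟩
  refine ⟨hx0, fun j => ?_⟩
  rcases eq_or_ne j k with rfl | hjk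
  · exact hk.ge
  · have h1 : Real.sqrt (x k) + ∑ i ∈ univ.erase k, Real.sqrt (x i) = ∑ i, Real.sqrt (x i) :=
      Finset.add_sum_erase _ (fun i => Real.sqrt (x i)) (mem_univ k)
    have h2 : Real.sqrt (x j) ≤ ∑ i ∈ univ.erase k, Real.sqrt (x i) :=
      Finset.single_le_sum (fun i _ => Real.sqrt_nonneg _) (by simp [hjk])
    linarith

lemma T_subset_hull (m : ℕ) (hm : 2 ≤ m) : Tcone m ⊆ convexHull ℝ (Eset m) := by
  suffices H : ∀ N : ℕ, ∀ x ∈ Tcone m,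
      (univ.filter fun i => x i ≠ 0).card ≤ N → x ∈ convexHull ℝ (Eset m) by
    exact fun x hx => H _ x hx le_rfl
  intro N
  induction N with
  | zero =>
    intro x hx hcard
    have hx0 : ∀ i, x i = 0 := by
      intro i
      by_contra h
      have : i ∈ univ.filter fun i => x i ≠ 0 := by simp [h]
      have := Finset.card_pos.mpr ⟨i, this⟩
      omega
    apply subset_convexHull
    refine ⟨fun i => (hx0 i).ge, ⟨0, by omega⟩, ?_⟩
    simp [hx0]
  | succ n ih =>
    intro x hx hcard
    obtain ⟨hx0, hxT⟩ := hx
    set u : Fin m → ℝ := fun i => Real.sqrt (x i) with hu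
    have hu0 : ∀ i, 0 ≤ u i := fun i => Real.sqrt_nonneg _
    have hx_eq : ∀ i, x i = u i ^ 2 := fun i => (Real.sq_sqrt (hx0 i)).symm
    by_cases heq : ∃ k, ∑ i, u i = 2 * u k
    · exact subset_convexHull _ _ ⟨hx0, heq⟩
    push_neg at heq
    have hstrict : ∀ k, 2 * u k < ∑ i, u i :=
      fun k => lt_of_le_of_ne (hxT k) fun h => heq k h.symm
    obtain ⟨k, -, hk⟩ := Finset.exists_max_image univ u ⟨⟨0, by omega⟩, mem_univ _⟩
    set S' : ℝ := ∑ i ∈ univ.erase k, u i with hS'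
    have hS'0 : 0 ≤ S' := Finset.sum_nonneg fun i _ => hu0 i
    have hsum : u k + S' = ∑ i, u i := Finset.add_sum_erase _ u (mem_univ k)
    have hukS' : u k < S' := by have := hstrict k; linarith
    have hkn0 : 0 < u k := by
      by_contra h
      push_neg at h
      have huk0 : u k = 0 := le_antisymm h (hu0 k)
      have : ∑ i, u i ≤ 0 := by
        apply Finset.sum_nonpos
        intro i _
        calc u i ≤ u k := hk i (mem_univ i)
          _ = 0 := huk0
      have := hstrict k
      rw [huk0] at this
      linarith
    have hne : (univ.erase k).Nonempty := by
      apply Finset.card_pos.mp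
      rw [Finset.card_erase_of_mem (mem_univ k), Finset.card_univ, Fintype.card_fin]
      omega
    obtain ⟨i₀, hi₀mem, hi₀⟩ := Finset.exists_max_image (univ.erase k) u hne
    have hi₀k : i₀ ≠ k := Finset.ne_of_mem_erase hi₀mem
    set c : ℝ := max 0 (2 * u i₀ - S') with hc
    have hc0 : 0 ≤ c := le_max_left _ _
    have hui₀S' : u i₀ ≤ S' := Finset.single_le_sum (fun i _ => hu0 i) hi₀mem
    have hcuk : c ≤ u k := by
      apply max_le (le_of_lt hkn0)
      have := hk i₀ (mem_univ i₀)
      linarith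
    have hcS' : c < S' := lt_of_le_of_lt hcuk hukS'
    set p : Fin m → ℝ := Function.update x k (S' ^ 2) with hp
    set q : Fin m → ℝ := Function.update x k (c ^ 2) with hq
    have hpe : ∀ i ∈ univ.erase k, p i = x i := fun i hi =>
      Function.update_of_ne (Finset.ne_of_mem_erase hi) _ _
    have hpk : p k = S' ^ 2 := Function.update_self _ _ _
    have hqk2 : q k = c ^ 2 := Function.update_self _ _ _
    have hpne : ∀ i, i ≠ k → p i = x i := fun i h => Function.update_of_ne h _ _
    have hqne : ∀ i, i ≠ k → q i = x i := fun i h => Function.update_of_ne h _ _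
    have hqe : ∀ i ∈ univ.erase k, q i = x i := fun i hi =>
      Function.update_of_ne (Finset.ne_of_mem_erase hi) _ _
    have hpsum : ∑ i, Real.sqrt (p i) = 2 * S' := by
      rw [← Finset.add_sum_erase _ (fun i => Real.sqrt (p i)) (mem_univ k)]
      rw [Finset.sum_congr rfl fun i hi => by rw [hpe i hi]]
      have : p k = S' ^ 2 := Function.update_self _ _ _
      rw [this, Real.sqrt_sq hS'0]
      rw [← hS']; ring
    have hpE : p ∈ Eset m := by
      refine ⟨fun i => ?_, k, ?_⟩
      · rcases eq_or_ne i k with rfl | h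
        · rw [hpk]; positivity
        · rw [hpne i h]; exact hx0 i
      · rw [hpsum, hpk, Real.sqrt_sq hS'0]
    have hqsum : ∑ i, Real.sqrt (q i) = c + S' := by
      rw [← Finset.add_sum_erase _ (fun i => Real.sqrt (q i)) (mem_univ k)]
      rw [Finset.sum_congr rfl fun i hi => by rw [hqe i hi]]
      have : q k = c ^ 2 := Function.update_self _ _ _
      rw [this, Real.sqrt_sq hc0, ← hS']
    have hq0 : ∀ i, 0 ≤ q i := by
      intro i
      rcases eq_or_ne i k with rfl | h
      · rw [hqk2]; positivity
      · rw [hqne i h]; exact hx0 i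
    have hqH : q ∈ convexHull ℝ (Eset m) := by
      rcases le_or_gt (2 * u i₀ - S') 0 with hcase | hcase
      · -- c = 0, recurse
        have hczero : c = 0 := max_eq_left hcase
        have hqk : q k = 0 := by rw [hqk2, hczero]; ring
        have hqT : q ∈ Tcone m := by
          refine ⟨hq0, fun j => ?_⟩
          rw [hqsum, hczero, zero_add]
          rcases eq_or_ne j k with rfl | h
          · rw [hqk, Real.sqrt_zero]; linarith
          · rw [hqne j h]
            have : u j ≤ u i₀ := hi₀ j (Finset.mem_erase.mpr ⟨h, mem_univ j⟩)
            have : Real.sqrt (x j) = u j := rfl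
            rw [this]
            linarith
        apply ih q hqT
        have hsub : (univ.filter fun i => q i ≠ 0) ⊆ (univ.filter fun i => x i ≠ 0).erase k := by
          intro i hi
          simp only [Finset.mem_filter, mem_univ, true_and] at hi
          rcases eq_or_ne i k with rfl | h
          · exact absurd hqk hi
          · refine Finset.mem_erase.mpr ⟨h, ?_⟩
            simp only [Finset.mem_filter, mem_univ, true_and]
            rwa [hqne i h] at hi
        have hkmem : k ∈ univ.filter fun i => x i ≠ 0 := by
          simp only [Finset.mem_filter, mem_univ, true_and]
          rw [hx_eq k]
          positivity
        have h1 := Finset.card_le_card hsub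
        have h2 := Finset.card_erase_of_mem hkmem
        have h3 := Finset.card_pos.mpr ⟨k, hkmem⟩
        omega
      · -- c > 0, q ∈ E
        have hcval : c = 2 * u i₀ - S' := max_eq_right hcase.le
        apply subset_convexHull
        refine ⟨hq0, i₀, ?_⟩
        rw [hqsum, hqne i₀ hi₀k]
        have : Real.sqrt (x i₀) = u i₀ := rfl
        rw [this, hcval]
        ring
    -- combine
    have hdenom : 0 < S' ^ 2 - c ^ 2 := by nlinarith
    set lam : ℝ := (u k ^ 2 - c ^ 2) / (S' ^ 2 - c ^ 2) with hlam
    have hlam0 : 0 ≤ lam := by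
      apply div_nonneg _ hdenom.le
      nlinarith
    have hlam1 : lam ≤ 1 := by
      rw [div_le_one hdenom]
      nlinarith
    have hxcomb : x = lam • p + (1 - lam) • q := by
      funext i
      simp only [Pi.add_apply, Pi.smul_apply, smul_eq_mul]
      rcases eq_or_ne i k with rfl | h
      · rw [hpk, hqk2, hx_eq i]
        have : lam * (S' ^ 2 - c ^ 2) = u i ^ 2 - c ^ 2 := by
          rw [hlam]; field_simp
        nlinarith [this]
      · rw [hpne i h, hqne i h]; ring
    rw [hxcomb]
    exact (convex_convexHull ℝ (Eset m)) (subset_convexHull ℝ (Eset m) hpE) hqH hlam0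
      (by linarith) (by ring)

theorem stmt_12 (m : ℕ) (hm : 2 ≤ m) :
    IsClosed (Tcone m) ∧
    Convex ℝ (Tcone m) ∧
    (∀ c : ℝ, 0 ≤ c → ∀ x ∈ Tcone m, c • x ∈ Tcone m) ∧
    Tcone m = convexHull ℝ
      {x : Fin m → ℝ | (∀ i, 0 ≤ x i) ∧
        ∃ k, ∑ i, Real.sqrt (x i) = 2 * Real.sqrt (x k)} := by
  refine ⟨?_, Tcone_convex m, ?_, ?_⟩
  · have : Tcone m = (⋂ i, {x : Fin m → ℝ | 0 ≤ x i}) ∩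
        ⋂ k, {x : Fin m → ℝ | 2 * Real.sqrt (x k) ≤ ∑ i, Real.sqrt (x i)} := by
      ext x
      simp only [Tcone, Set.mem_setOf_eq, Set.mem_inter_iff, Set.mem_iInter]
    rw [this]
    apply IsClosed.inter
    · exact isClosed_iInter fun i => isClosed_le continuous_const (continuous_apply i)
    · refine isClosed_iInter fun k => isClosed_le ?_ ?_
      · exact continuous_const.mul (Real.continuous_sqrt.comp (continuous_apply k))
      · exact continuous_finset_sum _ fun i _ =>
          Real.continuous_sqrt.comp (continuous_apply i)
  · rintro c hc x ⟨hx0, hxT⟩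
    constructor
    · intro i
      simp only [Pi.smul_apply, smul_eq_mul]
      exact mul_nonneg hc (hx0 i)
    · intro k
      have hs : ∀ i, Real.sqrt ((c • x) i) = Real.sqrt c * Real.sqrt (x i) := by
        intro i
        simp only [Pi.smul_apply, smul_eq_mul]
        exact Real.sqrt_mul hc _
      simp only [hs, ← Finset.mul_sum]
      have := hxT k
      nlinarith [Real.sqrt_nonneg c]
  · exact Set.Subset.antisymm (T_subset_hull m hm)
      (convexHull_min (Eset_subset m) (Tcone_convex m))
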